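/- The lattice equation with polynomial E(w,x,y,z) = (wz+1)(x+y) + 2(xy+1)(w+z), i.e. (u_{n,m}u_{n+1,m+1}+1)(u_{n+1,m}+u_{n,m+1}) + 2(u_{n+1,m}u_{n,m+1}+1)(u_{n,m}+u_{n+1,m+1}) = 0, admits the five-point generalized symmetry with generator g_{n,m} = (u_{n,m}² - 1)(u_{n+1,m} - u_{n-1,m})/(u_{n+1,m}u_{n-1,m} - 1): for every solution u : ℤ × ℤ → ℝ of the equation satisfying u_{n+1,m}u_{n-1,m} ≠ 1 for all (n,m), and every (n,m) ∈ ℤ², the linearized equation g_{n,m}·∂₁E + g_{n+1,m}·∂₂E + g_{n,m+1}·∂₃E + g_{n+1,m+1}·∂₄E = 0 holds, where each ∂ᵢE is evaluated at (u_{n,m}, u_{n+1,m}, u_{n,m+1}, u_{n+1,m+1}). -/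

import Mathlib

lemma hd1 (x y z w0 : ℝ) :
    deriv (fun w : ℝ => (w * z + 1) * (x + y) + 2 * (x * y + 1) * (w + z)) w0
      = z * (x + y) + 2 * (x * y + 1) := by
  have h := ((((hasDerivAt_id w0).mul_const z).add_const 1).mul_const (x + y)).add
    (((hasDerivAt_id w0).add_const z).const_mul (2 * (x * y + 1)))
  exact h.deriv.trans (by ring)

lemma hd2 (w y z x0 : ℝ) :
    deriv (fun x : ℝ => (w * z + 1) * (x + y) + 2 * (x * y + 1) * (w + z)) x0
      = (w * z + 1) + 2 * y * (w + z) := by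
  have h := (((hasDerivAt_id x0).add_const y).const_mul (w * z + 1)).add
    (((((hasDerivAt_id x0).mul_const y).add_const 1).const_mul 2).mul_const (w + z))
  exact h.deriv.trans (by ring)

lemma hd3 (w x z y0 : ℝ) :
    deriv (fun y : ℝ => (w * z + 1) * (x + y) + 2 * (x * y + 1) * (w + z)) y0
      = (w * z + 1) + 2 * x * (w + z) := by
  have h := (((hasDerivAt_id y0).const_add x).const_mul (w * z + 1)).add
    (((((hasDerivAt_id y0).const_mul x).add_const 1).const_mul 2).mul_const (w + z))
  exact h.deriv.trans (by ring)

lemma hd4 (w x y z0 : ℝ) :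
    deriv (fun z : ℝ => (w * z + 1) * (x + y) + 2 * (x * y + 1) * (w + z)) z0
      = w * (x + y) + 2 * (x * y + 1) := by
  have h := ((((hasDerivAt_id z0).const_mul w).add_const 1).mul_const (x + y)).add
    (((hasDerivAt_id z0).const_add w).const_mul (2 * (x * y + 1)))
  exact h.deriv.trans (by ring)

set_option maxHeartbeats 4000000 in
theorem stmt_6
    (E : ℝ → ℝ → ℝ → ℝ → ℝ)
    (hE : ∀ w x y z : ℝ, E w x y z = (w * z + 1) * (x + y) + 2 * (x * y + 1) * (w + z))
    (u : ℤ × ℤ → ℝ)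
    (hu : ∀ n m : ℤ, E (u (n, m)) (u (n + 1, m)) (u (n, m + 1)) (u (n + 1, m + 1)) = 0)
    (hne : ∀ n m : ℤ, u (n + 1, m) * u (n - 1, m) ≠ 1)
    (g : ℤ × ℤ → ℝ)
    (hg : ∀ n m : ℤ, g (n, m) = (u (n, m) ^ 2 - 1) * (u (n + 1, m) - u (n - 1, m)) / (u (n + 1, m) * u (n - 1, m) - 1))
    (n m : ℤ) :
    g (n, m) * deriv (fun w => E w (u (n + 1, m)) (u (n, m + 1)) (u (n + 1, m + 1))) (u (n, m))
      + g (n + 1, m) * deriv (fun x => E (u (n, m)) x (u (n, m + 1)) (u (n + 1, m + 1))) (u (n + 1, m))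
      + g (n, m + 1) * deriv (fun y => E (u (n, m)) (u (n + 1, m)) y (u (n + 1, m + 1))) (u (n, m + 1))
      + g (n + 1, m + 1) * deriv (fun z => E (u (n, m)) (u (n + 1, m)) (u (n, m + 1)) z) (u (n + 1, m + 1)) = 0 := by
  have i1 : (n - 1 + 1 : ℤ) = n := by ring
  have i2 : (n + 1 + 1 : ℤ) = n + 2 := by ring
  have i3 : (n + 1 - 1 : ℤ) = n := by ring
  -- equations
  have e1 := hu (n - 1) m
  have e2 := hu n m
  have e3 := hu (n + 1) m
  rw [hE, i1] at e1
  rw [hE] at e2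
  rw [hE, i2] at e3
  -- denominators
  have f1 := sub_ne_zero_of_ne (hne n m)
  have f2 := sub_ne_zero_of_ne (hne (n + 1) m)
  have f3 := sub_ne_zero_of_ne (hne n (m + 1))
  have f4 := sub_ne_zero_of_ne (hne (n + 1) (m + 1))
  rw [i2, i3] at f2
  rw [i2, i3] at f4
  -- generator values
  have hg1 := hg n m
  have hg2 := hg (n + 1) m
  have hg3 := hg n (m + 1)
  have hg4 := hg (n + 1) (m + 1)
  rw [i2, i3] at hg2
  rw [i2, i3] at hg4
  simp only [hE]
  rw [hg1, hg2, hg3, hg4, hd1, hd2, hd3, hd4]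
  set a := u (n - 1, m)
  set b := u (n, m)
  set c := u (n + 1, m)
  set d := u (n + 2, m)
  set A := u (n - 1, m + 1)
  set B := u (n, m + 1)
  set C := u (n + 1, m + 1)
  set D := u (n + 2, m + 1)
  clear_value a b c d A B C D
  rw [div_mul_eq_mul_div, div_mul_eq_mul_div, div_mul_eq_mul_div, div_mul_eq_mul_div,
    div_add_div _ _ f1 f2, div_add_div _ _ (mul_ne_zero f1 f2) f3,
    div_add_div _ _ (mul_ne_zero (mul_ne_zero f1 f2) f3) f4,
    div_eq_zero_iff, or_iff_left (mul_ne_zero (mul_ne_zero (mul_ne_zero f1 f2) f3) f4)]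
  linear_combination (norm := ring1)
    ((-1:ℝ) + (-2:ℝ)*C*D + (-1:ℝ)*C^2 + (1:ℝ)*B*D + (-1:ℝ)/2*B*C + (3:ℝ)*B*C^2*D + (2:ℝ)*B*C^3 + (-1:ℝ)*d*C + (1:ℝ)*d*B*C*D + (2:ℝ)*d*B*C^2 + (4:ℝ)*d*B*C^3*D + (-5:ℝ)/4*c*D + (-41:ℝ)/8*c*C + (-1:ℝ)*c*C^2*D + (-1:ℝ)*c*B + (4:ℝ)*c*B*C*D + (4:ℝ)*c*B*C^2 + (1:ℝ)*c*B^2*D + (-2:ℝ)*c*B^2*C^2*D + (-1:ℝ)/2*c*B^2*C^3 + (-5:ℝ)/8*c*d + (-5:ℝ)/4*c*d*C*D + (4:ℝ)*c*d*C^2 + (14:ℝ)*c*d*C^3*D + (5:ℝ)*c*d*B*C + (27:ℝ)/2*c*d*B*C^2*D + (5:ℝ)*c*d*B*C^3 + (1:ℝ)/2*c*d*B^2 + (1:ℝ)/4*c*d*B^2*C*D + (-1:ℝ)*c*d*B^2*C^3*D + (-5:ℝ)/4*c^2 + (-61:ℝ)/8*c^2*C*D + (-15:ℝ)/2*c^2*C^2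 + (7:ℝ)*c^2*C^3*D + (3:ℝ)*c^2*B*D + (11:ℝ)/2*c^2*B*C^2*D + (53:ℝ)/2*c^2*B^2*C*D + (11:ℝ)*c^2*B^2*C^2 + (-5:ℝ)/2*c^2*B^2*C^3*D + (-5:ℝ)/8*c^2*d*D + (-7:ℝ)/4*c^2*d*C + (7:ℝ)*c^2*d*C^2*D + (2:ℝ)*c^2*d*B + (31:ℝ)/4*c^2*d*B*C*D + (17:ℝ)/2*c^2*d*B*C^2 + (14:ℝ)*c^2*d*B*C^3*D + (13:ℝ)*c^2*d*B^2*C + (24:ℝ)*c^2*d*B^2*C^2*D + (-17:ℝ)/2*c^3*C + (3:ℝ)*c^3*B + (2:ℝ)*c^3*B*C*D + (-3:ℝ)*c^3*B*C^2 + (7:ℝ)*c^3*B*C^3*D + (24:ℝ)*c^3*B^2*C + (13:ℝ)*c^3*B^2*C^2*D + (-7:ℝ)*c^3*d*C^2 + (3:ℝ)/2*c^3*d*B*D + (3:ℝ)*c^3*d*B*C + (7:ℝ)*c^3*d*B*C^2*D + (12:ℝ)*c^3*d*B^2*C*D + (24:ℝ)*c^3*d*B^2*C^2 + (-1:ℝ)*b*C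 + (-2:ℝ)*b*C^2*D + (1:ℝ)/2*b*B*C^2 + (-1:ℝ)/2*b*B^2*D + (1:ℝ)*b*d + (4:ℝ)*b*d*C*D + (-2:ℝ)*b*d*C^2 + (-8:ℝ)/3*b*d*C^3*D + (5:ℝ)/3*b*d*B*C^2*D + (-1:ℝ)/4*b*d*B^2 + (-1:ℝ)/2*b*d*B^2*C*D + (-2:ℝ)*b*c + (-16:ℝ)*b*c*C*D + (-8:ℝ)*b*c*C^2 + (-1:ℝ)*b*c*C^3*D + (-7:ℝ)/2*b*c*B*D + (-7:ℝ)/2*b*c*B*C + (-1:ℝ)/2*b*c*B*C^2*D + (7:ℝ)/4*b*c*B*C^3 + (-1:ℝ)/2*b*c*B^2 + (-1:ℝ)/4*b*c*B^2*C*D + (-1:ℝ)*b*c*B^2*C^3*D + (1:ℝ)*b*c*d*D + (15:ℝ)/2*b*c*d*C + (37:ℝ)/3*b*c*d*C^2*D + (-2:ℝ)*b*c*d*C^3 + (3:ℝ)*b*c*d*B + (19:ℝ)/3*b*c*d*B*C*D + (19:ℝ)/4*b*c*d*B*C^2 + (47:ℝ)/6*b*c*d*B*C^3*D + (-1:ℝ)/4*b*c*d*B^2*D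 + (-1:ℝ)/2*b*c*d*B^2*C + (-3:ℝ)/4*b*c*d*B^2*C^2*D + (1:ℝ)/2*b*c*d*B^2*C^3 + (-15:ℝ)/2*b*c^2*D + (-91:ℝ)/4*b*c^2*C + (3:ℝ)/4*b*c^2*C^3 + (-15:ℝ)/2*b*c^2*B + (-13:ℝ)*b*c^2*B*C*D + (-4:ℝ)*b*c^2*B*C^2 + (13:ℝ)/4*b*c^2*B*C^3*D + (-2:ℝ)*b*c^2*B^2*C + (-2:ℝ)*b*c^2*B^2*C^2*D + (19:ℝ)/3*b*c^2*d*C*D + (15:ℝ)/4*b*c^2*d*C^2 + (17:ℝ)/2*b*c^2*d*C^3*D + (2:ℝ)*b*c^2*d*B*D + (12:ℝ)*b*c^2*d*B*C + (121:ℝ)/6*b*c^2*d*B*C^2*D + (2:ℝ)*b*c^2*d*B*C^3 + (-2:ℝ)*b*c^2*d*B^2*C*D + (-15:ℝ)/2*b*c^3 + (-4:ℝ)*b*c^3*C*D + (17:ℝ)/4*b*c^3*C^3*D + (-15:ℝ)*b*c^3*B*C + (1:ℝ)*b*c^3*B*C^2*D + (-2:ℝ)*b*c^3*B^2 + (17:ℝ)/4*b*c^3*d*C^2*D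 + (3:ℝ)/2*b*c^3*d*C^3 + (17:ℝ)/2*b*c^3*d*B*C*D + (3:ℝ)*b*c^3*d*B*C^2 + (-1:ℝ)*b*c^3*d*B^2*D + (-2:ℝ)*b*c^3*d*B^2*C + (2:ℝ)/3*b^2*C*D + (4:ℝ)/3*b^2*C^2 + (1:ℝ)/2*b^2*B*C + (1:ℝ)/2*b^2*B*C^3 + (1:ℝ)/4*b^2*B^2*C^2 + (2:ℝ)*b^2*d*D + (1:ℝ)/3*b^2*d*C + (1:ℝ)*b^2*d*B*C*D + (-1:ℝ)/3*b^2*d*B*C^3*D + (8:ℝ)/3*b^2*c*C + (2:ℝ)/3*b^2*c*C^2*D + (2:ℝ)/3*b^2*c*C^3 + (9:ℝ)/4*b^2*c*B*C^2 + (1:ℝ)/2*b^2*c*B^2*C + (19:ℝ)/2*b^2*c*d + (16:ℝ)*b^2*c*d*C*D + (5:ℝ)/6*b^2*c*d*C^2 + (2:ℝ)*b^2*c*d*B*D + (19:ℝ)/4*b^2*c*d*B*C + (20:ℝ)/3*b^2*c*d*B*C^2*D + (-1:ℝ)/2*b^2*c^2*C*D + (4:ℝ)/3*b^2*c^2*C^2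 + (1:ℝ)/6*b^2*c^2*C^3*D + (1:ℝ)*b^2*c^2*B*D + (5:ℝ)/2*b^2*c^2*B*C + (-1:ℝ)/4*b^2*c^2*B*C^2*D + (15:ℝ)/2*b^2*c^2*d*D + (79:ℝ)/4*b^2*c^2*d*C + (15:ℝ)/2*b^2*c^2*d*C^2*D + (1:ℝ)/3*b^2*c^2*d*C^3 + (10:ℝ)*b^2*c^2*d*B + (233:ℝ)/12*b^2*c^2*d*B*C*D + (15:ℝ)/2*b^2*c^2*d*B*C^2 + (-1:ℝ)/4*b^2*c^3*C^2*D + (1:ℝ)*b^2*c^3*B + (15:ℝ)/4*b^2*c^3*d*C*D + (15:ℝ)/2*b^2*c^3*d*C^2 + (8:ℝ)*b^2*c^3*d*B*D + (16:ℝ)*b^2*c^3*d*B*C) * e1 +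
    ((-1:ℝ)*C*D + (-2:ℝ)*B*D + (1:ℝ)*B^2*C*D + (1:ℝ)/2*A*C + (1:ℝ)*A*C^2*D + (1:ℝ)*A*B + (-2:ℝ)*A*B*C*D + (-2:ℝ)*A*B*C^2 + (-1:ℝ)*A*B^2*D + (-1:ℝ)*d*D + (-4:ℝ)*d*B*C*D + (-2:ℝ)*d*A*B*C + (-2:ℝ)*d*A*B*C^2*D + (1:ℝ)*c*C + (-2:ℝ)*c*B*C*D + (-2:ℝ)*c*B^2*D + (2:ℝ)*c*B^2*C^2*D + (-2:ℝ)*c*A*B*C + (-22:ℝ)*c*A*B^2*C*D + (-11:ℝ)*c*A*B^2*C^2 + (-1:ℝ)*c*d + (-8:ℝ)*c*d*B*C + (-14:ℝ)*c*d*B*C^2*D + (-1:ℝ)*c*d*B^2 + (-1:ℝ)/2*c*d*B^2*C*D + (-1:ℝ)*c*d*B^2*C^2 + (-2:ℝ)*c*d*A*C + (-7:ℝ)*c*d*A*C^2*D + (-1:ℝ)/2*c*d*A*B + (-9:ℝ)/4*c*d*A*B*C*D + (-5:ℝ)/2*c*d*A*B*C^2 + (-11:ℝ)*c*d*A*B^2*C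 + (-22:ℝ)*c*d*A*B^2*C^2*D + (3:ℝ)*c^2*B*C + (-7:ℝ)*c^2*B*C^2*D + (-1:ℝ)*c^2*B^2*C*D + (3:ℝ)/2*c^2*A*C + (-7:ℝ)/2*c^2*A*C^2*D + (-1:ℝ)/2*c^2*A*B*C*D + (-22:ℝ)*c^2*A*B^2*C + (-11:ℝ)*c^2*A*B^2*C^2*D + (-7:ℝ)*c^2*d*B*C*D + (-7:ℝ)/2*c^2*d*A*C*D + (-11:ℝ)*c^2*d*A*B^2*C*D + (-22:ℝ)*c^2*d*A*B^2*C^2 + (-1:ℝ)*b*B + (-1:ℝ)*b*B*C^2 + (1:ℝ)*b*B^2*D + (1:ℝ)/2*b*A*B*D + (2:ℝ)*b*A*B*C + (-1:ℝ)/2*b*d + (-1:ℝ)*b*d*C*D + (-2:ℝ)*b*d*B*D + (2:ℝ)/3*b*d*B*C^2*D + (1:ℝ)/2*b*d*B^2 + (-1:ℝ)*b*d*A*D + (1:ℝ)/2*b*d*A*C + (1:ℝ)/3*b*d*A*C^2*D + (-3:ℝ)/4*b*d*A*B + (-3:ℝ)/2*b*d*A*B*C*D + (1:ℝ)*b*d*A*B*C^2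 + (1:ℝ)*b*d*A*B^2*D + (-2:ℝ)*b*c*C*D + (-3:ℝ)/4*b*c*C^2 + (-1:ℝ)*b*c*B*D + (-2:ℝ)*b*c*B*C + (1:ℝ)*b*c*B*C^2*D + (1:ℝ)*b*c*B^2 + (1:ℝ)/2*b*c*B^2*C*D + (15:ℝ)/2*b*c*A*D + (15:ℝ)/4*b*c*A*C + (1:ℝ)/2*b*c*A*C^2*D + (5:ℝ)/2*b*c*A*B + (45:ℝ)/4*b*c*A*B*C*D + (11:ℝ)/2*b*c*A*B*C^2 + (1:ℝ)*b*c*A*B^2*C + (2:ℝ)*b*c*A*B^2*C^2*D + (-1:ℝ)/2*b*c*d*D + (-23:ℝ)/4*b*c*d*C + (-17:ℝ)/2*b*c*d*C^2*D + (-10:ℝ)*b*c*d*B + (-167:ℝ)/12*b*c*d*B*C*D + (-1:ℝ)/2*b*c*d*B*C^2 + (1:ℝ)/2*b*c*d*B^2*D + (1:ℝ)*b*c*d*B^2*C + (2:ℝ)/3*b*c*d*A*C*D + (1:ℝ)*b*c*d*A*C^2 + (-3:ℝ)/4*b*c*d*A*B*D + (-3:ℝ)*b*c*d*A*B*C^2*D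 + (3:ℝ)/2*b*c*d*A*B^2*C*D + (-1:ℝ)*b*c*d*A*B^2*C^2 + (-17:ℝ)/4*b*c^2*C^2*D + (15:ℝ)/2*b*c^2*A + (4:ℝ)*b*c^2*A*C*D + (14:ℝ)*b*c^2*A*B*C + (-3:ℝ)/2*b*c^2*A*B*C^2*D + (2:ℝ)*b*c^2*A*B^2 + (-17:ℝ)/4*b*c^2*d*C*D + (-3:ℝ)/2*b*c^2*d*C^2 + (-15:ℝ)/2*b*c^2*d*B*D + (-15:ℝ)*b*c^2*d*B*C + (-3:ℝ)/2*b*c^2*d*A*B*C*D + (11:ℝ)*b*c^2*d*A*B*C^2 + (1:ℝ)*b*c^2*d*A*B^2*D + (2:ℝ)*b*c^2*d*A*B^2*C + (-1:ℝ)/3*b^2*C*D + (-2:ℝ)/3*b^2*C^2 + (-1:ℝ)/4*b^2*B*C + (-1:ℝ)*b^2*A*B*C^2 + (-1:ℝ)/2*b^2*A*B^2*C + (-1:ℝ)*b^2*d*D + (-1:ℝ)/6*b^2*d*C + (-2:ℝ)*b^2*d*A*B*D + (2:ℝ)/3*b^2*d*A*B*C^2*D + (15:ℝ)/2*b^2*c*D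 + (29:ℝ)/12*b^2*c*C + (-1:ℝ)/6*b^2*c*C^2*D + (-2:ℝ)*b^2*c*A*B*C + (-1:ℝ)/3*b^2*c*d*C^2 + (-1:ℝ)*b^2*c*d*B*D + (-1:ℝ)*b^2*c*d*A*C + (-19:ℝ)/2*b^2*c*d*A*B + (-41:ℝ)/3*b^2*c*d*A*B*C*D + (15:ℝ)/2*b^2*c^2 + (4:ℝ)*b^2*c^2*C*D + (1:ℝ)/2*b^2*c^2*A*B*C*D + (-15:ℝ)/2*b^2*c^2*d*A*B*D + (-15:ℝ)*b^2*c^2*d*A*B*C + (-3:ℝ)*a*B*C*D + (-2:ℝ)*a*B*C^2 + (1:ℝ)*a*A + (-1:ℝ)*a*A*B*D + (1:ℝ)/2*a*A*B*C + (1:ℝ)/2*a*A*B^2*C*D + (1:ℝ)/4*a*A*B^2*C^2 + (-2:ℝ)*a*d*C*D + (-2:ℝ)*a*d*B*C + (-4:ℝ)*a*d*B*C^2*D + (-1:ℝ)*a*d*A*B*C*D + (1:ℝ)/4*a*d*A*B^2*C + (1:ℝ)/2*a*d*A*B^2*C^2*D + (2:ℝ)*a*c + (15:ℝ)*a*c*C*D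 + (7:ℝ)*a*c*C^2 + (-8:ℝ)*a*c*B*D + (-7:ℝ)*a*c*B*C + (-1:ℝ)*a*c*B^2*C*D + (-1:ℝ)*a*c*A*C^2*D + (1:ℝ)*a*c*A*B*C^2 + (1:ℝ)/2*a*c*A*B^2*C + (5:ℝ)/4*a*c*A*B^2*C^2*D + (1:ℝ)*a*c*d*D + (1:ℝ)*a*c*d*C + (-5:ℝ)*a*c*d*B + (-17:ℝ)/2*a*c*d*B*C*D + (-5:ℝ)*a*c*d*B*C^2 + (-1:ℝ)*a*c*d*A*C*D + (-2:ℝ)*a*c*d*A*B*C + (-7:ℝ)*a*c*d*A*B*C^2*D + (-1:ℝ)/2*a*c*d*A*B^2 + (17:ℝ)*a*c^2*C + (-6:ℝ)*a*c^2*B + (-4:ℝ)*a*c^2*B*C*D + (3:ℝ)/2*a*c^2*A*B*C + (-7:ℝ)/2*a*c^2*A*B*C^2*D + (-1:ℝ)/2*a*c^2*A*B^2*C*D + (1:ℝ)*a*c^2*d + (14:ℝ)*a*c^2*d*C^2 + (-4:ℝ)*a*c^2*d*B*D + (-6:ℝ)*a*c^2*d*B*C + (-1:ℝ)*a*c^2*d*A*C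 + (-5:ℝ)/2*a*c^2*d*A*B*C*D + (1:ℝ)*a*b + (2:ℝ)*a*b*C*D + (1:ℝ)/2*a*b*B*C + (1:ℝ)*a*b*A*B*C*D + (-1:ℝ)/2*a*b*A*B*C^2 + (-1:ℝ)/4*a*b*A*B^2*C + (-2:ℝ)*a*b*d*D + (2:ℝ)*a*b*d*C + (8:ℝ)/3*a*b*d*C^2*D + (1:ℝ)/2*a*b*d*B + (-1:ℝ)*a*b*d*B*C*D + (-1:ℝ)*a*b*d*A + (-2:ℝ)*a*b*d*A*C*D + (1:ℝ)/3*a*b*d*A*B*C^2*D + (14:ℝ)*a*b*c*D + (15:ℝ)/2*a*b*c*C + (1:ℝ)*a*b*c*C^2*D + (3:ℝ)*a*b*c*B + (-1:ℝ)*a*b*c*B*C*D + (-3:ℝ)/4*a*b*c*B*C^2 + (1:ℝ)/2*a*b*c*B^2*C + (1:ℝ)*a*b*c*B^2*C^2*D + (2:ℝ)*a*b*c*A + (-2:ℝ)*a*b*c*A*C*D + (-3:ℝ)/2*a*b*c*A*C^2 + (-1:ℝ)/2*a*b*c*A*B*D + (-5:ℝ)/4*a*b*c*A*B*C + (2:ℝ)*a*b*c*A*B*C^2*D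 + (-2:ℝ)*a*b*c*d + (1:ℝ)/3*a*b*c*d*C*D + (2:ℝ)*a*b*c*d*C^2 + (1:ℝ)/2*a*b*c*d*B*D + (-11:ℝ)/4*a*b*c*d*B*C + (-17:ℝ)/2*a*b*c*d*B*C^2*D + (7:ℝ)/4*a*b*c*d*B^2*C*D + (-1:ℝ)/2*a*b*c*d*B^2*C^2 + (-15:ℝ)/2*a*b*c*d*A*C + (-16:ℝ)*a*b*c*d*A*C^2*D + (-4:ℝ)*a*b*c*d*A*B + (-19:ℝ)/3*a*b*c*d*A*B*C*D + (-2:ℝ)*a*b*c*d*A*B*C^2 + (-1:ℝ)*a*b*c*d*A*B^2*D + (14:ℝ)*a*b*c^2 + (8:ℝ)*a*b*c^2*C*D + (1:ℝ)*a*b*c^2*B*D + (-17:ℝ)/4*a*b*c^2*B*C^2*D + (1:ℝ)*a*b*c^2*B^2 + (1:ℝ)*a*b*c^2*A*C + (-17:ℝ)/2*a*b*c^2*A*C^2*D + (3:ℝ)/2*a*b*c^2*A*B + (-1:ℝ)*a*b*c^2*A*B*C*D + (-17:ℝ)/4*a*b*c^2*d*B*C*D + (-3:ℝ)/2*a*b*c^2*d*B*C^2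 + (1:ℝ)/2*a*b*c^2*d*B^2*D + (1:ℝ)*a*b*c^2*d*B^2*C + (-17:ℝ)/2*a*b*c^2*d*A*C*D + (-3:ℝ)*a*b*c^2*d*A*C^2 + (-3:ℝ)*a*b*c^2*d*A*B*D + (-6:ℝ)*a*b*c^2*d*A*B*C + (-1:ℝ)/2*a*b^2*B*C^2 + (-1:ℝ)/4*a*b^2*B^2*C + (2:ℝ)*a*b^2*A*C*D + (-1:ℝ)/2*a*b^2*A*B*C + (-1:ℝ)*a*b^2*d + (1:ℝ)/3*a*b^2*d*B*C^2*D + (-2:ℝ)*a*b^2*d*A*D + (2:ℝ)*a*b^2*d*A*C + (8:ℝ)/3*a*b^2*d*A*C^2*D + (-1:ℝ)*a*b^2*d*A*B*C*D + (-1:ℝ)/2*a*b^2*c*B*D + (-5:ℝ)/4*a*b^2*c*B*C + (1:ℝ)*a*b^2*c*A*C^2*D + (-5:ℝ)*a*b^2*c*d*B + (-47:ℝ)/6*a*b^2*c*d*B*C*D + (-19:ℝ)/2*a*b^2*c*d*A + (-41:ℝ)/3*a*b^2*c*d*A*C*D + (2:ℝ)*a*b^2*c*d*A*C^2 + (-1:ℝ)/2*a*b^2*c^2*B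 + (1:ℝ)/2*a*b^2*c^2*A*C*D + (-4:ℝ)*a*b^2*c^2*d*B*D + (-8:ℝ)*a*b^2*c^2*d*B*C + (-15:ℝ)/2*a*b^2*c^2*d*A*D + (-15:ℝ)*a*b^2*c^2*d*A*C) * e2 +
    ((1:ℝ) + (4:ℝ)*B*C + (-4:ℝ)*B^2*C^2 + (2:ℝ)*A*B^2*C + (9:ℝ)/4*c*B + (1:ℝ)*c*B^3*C^2 + (5:ℝ)/8*c*A + (49:ℝ)/2*c*A*B^2*C^2 + (11:ℝ)*c*A*B^3*C + (7:ℝ)*c^2*B*C + (-3:ℝ)*c^2*B^2 + (-24:ℝ)*c^2*B^3*C + (7:ℝ)/2*c^2*A*C + (-3:ℝ)/2*c^2*A*B + (-1:ℝ)*c^2*A*B^2*C + (22:ℝ)*c^2*A*B^3*C^2 + (2:ℝ)*b*C + (5:ℝ)/2*b*B + (3:ℝ)*b*A*B*C + (-3:ℝ)*b*A*B^2*C^2 + (9:ℝ)/8*b*c + (3:ℝ)/2*b*c*C^2 + (71:ℝ)/4*b*c*B*C + (7:ℝ)*b*c*B^2 + (-1:ℝ)*b*c*B^2*C^2 + (-47:ℝ)/4*b*c*A*B*C^2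 + (29:ℝ)/2*b*c*A*B^2*C + (-1:ℝ)*b*c*A*B^3 + (12:ℝ)*b*c*A*B^3*C^2 + (17:ℝ)/4*b*c^2*C + (6:ℝ)*b*c^2*B + (2:ℝ)*b*c^2*B^3 + (-3:ℝ)/4*b*c^2*A*C^2 + (-3:ℝ)*b*c^2*A*B^2 + (-4:ℝ)*b*c^2*A*B^3*C + (4:ℝ)/3*b^2*C^2 + (1:ℝ)/4*b^2*B^2 + (-1:ℝ)/2*b^2*B^3*C + (-1:ℝ)/3*b^2*A*C + (-1:ℝ)/2*b^2*A*B + (3:ℝ)/2*b^2*A*B*C^2 + (-5:ℝ)/4*b^2*A*B^2*C + (1:ℝ)/2*b^2*A*B^3 + (8:ℝ)/3*b^2*c*C + (-1:ℝ)*b^2*c*B^3 + (-15:ℝ)/2*b^2*c*A + (-2:ℝ)/3*b^2*c*A*C^2 + (3:ℝ)*b^2*c*A*B^2 + (-7:ℝ)*b^2*c*A*B^2*C^2 + (-15:ℝ)/4*b^2*c^2*A*C + (-1:ℝ)/2*b^2*c^2*A*B + (-7:ℝ)*b^2*c^2*A*B*C^2 + (1:ℝ)/6*b^3*B*C^2 +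 (-2:ℝ)/3*b^3*A*B*C + (-15:ℝ)/2*b^3*c + (-41:ℝ)/12*b^3*c*B*C + (-1:ℝ)/3*b^3*c*A*B*C^2 + (-15:ℝ)/4*b^3*c^2*C + (-8:ℝ)*b^3*c^2*B + (-1:ℝ)*b^3*c^2*A*B^2 + (2:ℝ)*a*C + (2:ℝ)*a*B^2*C + (1:ℝ)*a*A*B*C + (-5:ℝ)/2*a*A*B^2*C^2 + (-1:ℝ)/4*a*A*B^3*C + (1:ℝ)/4*a*c + (-14:ℝ)*a*c*C^2 + (-1:ℝ)*a*c*B*C + (4:ℝ)*a*c*B^2 + (5:ℝ)*a*c*B^2*C^2 + (1:ℝ)*a*c*A*C + (5:ℝ)/8*a*c*A*B + (-9:ℝ)/4*a*c*A*B^2*C + (-14:ℝ)*a*c^2*B*C^2 + (-18:ℝ)*a*c^2*B^2*C + (7:ℝ)/2*a*c^2*A*B*C + (-3:ℝ)/2*a*c^2*A*B^2 + (-12:ℝ)*a*c^2*A*B^3*C + (3:ℝ)*a*b*B*C + (2:ℝ)*a*b*A*C + (-3:ℝ)*a*b*A*B*C^2 + (-1:ℝ)/2*a*b*A*B^2*C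 + (1:ℝ)/4*a*b*A*B^3 + (-1:ℝ)/4*a*b*A*B^3*C^2 + (-14:ℝ)*a*b*c*C + (33:ℝ)/8*a*b*c*B + (-7:ℝ)*a*b*c*B*C^2 + (23:ℝ)/4*a*b*c*B^2*C + (-1:ℝ)/2*a*b*c*B^3 + (1:ℝ)/2*a*b*c*B^3*C^2 + (5:ℝ)/4*a*b*c*A + (3:ℝ)*a*b*c*A*C^2 + (6:ℝ)*a*b*c*A*B*C + (2:ℝ)*a*b*c*A*B^2 + (-17:ℝ)/2*a*b*c^2*C^2 + (-39:ℝ)/4*a*b*c^2*B*C + (6:ℝ)*a*b*c^2*B^2 + (3:ℝ)/2*a*b*c^2*B^2*C^2 + (-13:ℝ)*a*b*c^2*B^3*C + (17:ℝ)/2*a*b*c^2*A*C + (9:ℝ)/4*a*b*c^2*A*B*C^2 + (-39:ℝ)/2*a*b*c^2*A*B^2*C + (1:ℝ)*a*b*c^2*A*B^3 + (-8:ℝ)/3*a*b^2*C + (-1:ℝ)*a*b^2*B + (-1:ℝ)/2*a*b^2*B^2*C + (1:ℝ)/4*a*b^2*B^3 + (-4:ℝ)/3*a*b^2*A*B*C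 + (1:ℝ)/2*a*b^2*A*B^2 + (-14:ℝ)*a*b^2*c + (-4:ℝ)/3*a*b^2*c*C^2 + (17:ℝ)*a*b^2*c*A*C + (4:ℝ)*a*b^2*c*A*B + (-13:ℝ)/6*a*b^2*c*A*B*C^2 + (5:ℝ)/4*a*b^2*c*A*B^2*C + (-15:ℝ)/2*a*b^2*c^2*C + (-12:ℝ)*a*b^2*c^2*B + (15:ℝ)/2*a*b^2*c^2*B^2*C + (15:ℝ)/2*a*b^2*c^2*A + (57:ℝ)/4*a*b^2*c^2*A*B*C + (-1:ℝ)/3*a*b^3*B*C + (-8:ℝ)/3*a*b^3*A*C + (-1:ℝ)*a*b^3*A*B*C^2 + (1:ℝ)/2*a*b^3*c*B + (-1:ℝ)/6*a*b^3*c*B*C^2 + (1:ℝ)/4*a*b^3*c*B^2*C + (-4:ℝ)/3*a*b^3*c*A*C^2 + (-2:ℝ)*a*b^3*c*A*B*C + (1:ℝ)/4*a*b^3*c^2*B*C + (-1:ℝ)*a*b^3*c^2*A*B) * e3
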